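/- Let 0 < p_1 < p_2 < ... < p_n with n ≥ 2 and let 2 < r < 3. Then the Loewner matrix L_r is strictly conditionally positive definite: for every nonzero real vector x = (x_1, ..., x_n) with Σ_{i=1}^n x_i = 0, one has ⟨x, L_r x⟩ > 0. Consequently the inertia of L_r is (n-1, 0, 1). -/

import Mathlib

open Matrix

/-- The Loewner matrix `L_r` associated with points `p 0, ..., p (n-1)` and exponent `r`:
its `(i,j)` entry is `(p i ^ r - p j ^ r) / (p i - p j)` for `i ≠ j` and `r * p i ^ (r-1)`
for `i = j` (powers are real powers `Real.rpow`). -/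
noncomputable def loewner {n : ℕ} (p : Fin n → ℝ) (r : ℝ) : Matrix (Fin n) (Fin n) ℝ :=
  Matrix.of fun i j => if i = j then r * p i ^ (r - 1) else (p i ^ r - p j ^ r) / (p i - p j)

open MeasureTheory Real Set

section Kappa
variable {β : ℝ}

lemma rpow_split {s : ℝ} (hs0 : 0 < s) (c : ℝ) : s ^ (c - 1) = s ^ (c - 2) * s := by
  rw [show c - 1 = (c - 2) + 1 by ring, Real.rpow_add hs0, Real.rpow_one]

/-- base kernel integrability -/
lemma int_aux1 (hβ0 : 0 < β) (hβ1 : β < 1) {t : ℝ} (ht : 0 < t) :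
    IntegrableOn (fun s => s ^ (β - 1) / (s + t)) (Ioi 0) := by
  have hsplit : Ioi (0:ℝ) = Ioc 0 1 ∪ Ioi 1 := by
    ext s; simp only [mem_Ioi, mem_union, mem_Ioc]
    constructor
    · intro h; by_cases h1 : s ≤ 1 <;> [left; right] <;> [exact ⟨h, h1⟩; linarith]
    · rintro (⟨h, _⟩ | h) <;> linarith
  rw [hsplit]
  have hcont : ContinuousOn (fun s => s ^ (β - 1) / (s + t)) (Ioi 0) := by
    intro u hu
    apply ContinuousAt.continuousWithinAt
    have hu0 : (0:ℝ) < u := hu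
    exact (Real.continuousAt_rpow_const u (β-1) (Or.inl (ne_of_gt hu0))).div
      (continuousAt_id.add continuousAt_const) (by nlinarith)
  have hmeas : AEStronglyMeasurable (fun s => s ^ (β - 1) / (s + t)) (volume.restrict (Ioi 0)) :=
    hcont.aestronglyMeasurable measurableSet_Ioi
  apply IntegrableOn.union
  · -- on Ioc 0 1, bounded by s^(β-1) * t⁻¹
    have hbase : IntegrableOn (fun s => s ^ (β - 1) * t⁻¹) (Ioc (0:ℝ) 1) := by
      have h := intervalIntegral.intervalIntegrable_rpow' (a := 0) (b := 1) (r := β - 1) (by linarith)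
      rw [intervalIntegrable_iff_integrableOn_Ioc_of_le (by norm_num : (0:ℝ) ≤ 1)] at h
      exact h.mul_const _
    apply Integrable.mono hbase
    · exact hmeas.mono_set (fun s hs => hs.1)
    · filter_upwards [ae_restrict_mem measurableSet_Ioc] with s hs
      have hs0 : 0 < s := hs.1
      have h1 : 0 < s + t := by linarith
      have hr : 0 < s ^ (β-1) := Real.rpow_pos_of_pos hs0 _
      rw [Real.norm_eq_abs, Real.norm_eq_abs, abs_of_pos (div_pos hr h1),
        abs_of_pos (mul_pos hr (by positivity))]
      rw [div_eq_mul_inv]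
      exact mul_le_mul_of_nonneg_left (by
        apply inv_anti₀ ht; linarith) hr.le
  · -- on Ioi 1, bounded by s^(β-2)
    have hbase : IntegrableOn (fun s => s ^ (β - 2)) (Ioi (1:ℝ)) :=
      integrableOn_Ioi_rpow_of_lt (by linarith) one_pos
    apply Integrable.mono hbase
    · exact hmeas.mono_set (fun s (hs : (1:ℝ) < s) => (lt_trans one_pos hs : (0:ℝ) < s))
    · filter_upwards [ae_restrict_mem measurableSet_Ioi] with s hs
      have hs1 : (1:ℝ) < s := hs
      have hs0 : (0:ℝ) < s := lt_trans one_pos hs1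
      have h1 : 0 < s + t := by linarith
      have hr : 0 < s ^ (β-1) := Real.rpow_pos_of_pos hs0 _
      have hr2 : 0 < s ^ (β-2) := Real.rpow_pos_of_pos hs0 _
      rw [Real.norm_eq_abs, Real.norm_eq_abs, abs_of_pos (div_pos hr h1), abs_of_pos hr2]
      rw [div_le_iff₀ h1, rpow_split hs0 β]
      exact mul_le_mul_of_nonneg_left (by linarith) hr2.le

lemma int_aux2 (hβ0 : 0 < β) (hβ1 : β < 1) {t : ℝ} (ht : 0 < t) :
    IntegrableOn (fun s => s ^ (β - 1) / (s + t) ^ 2) (Ioi 0) := by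
  apply Integrable.mono ((int_aux1 hβ0 hβ1 ht).const_mul t⁻¹)
  · have hcont : ContinuousOn (fun s => s ^ (β - 1) / (s + t) ^ 2) (Ioi 0) := by
      intro u hu
      apply ContinuousAt.continuousWithinAt
      have hu0 : (0:ℝ) < u := hu
      exact (Real.continuousAt_rpow_const u (β-1) (Or.inl (ne_of_gt hu0))).div
        ((continuousAt_id.add continuousAt_const).pow 2) (by nlinarith)
    exact hcont.aestronglyMeasurable measurableSet_Ioi
  · filter_upwards [ae_restrict_mem measurableSet_Ioi] with s hs
    have hs0 : (0:ℝ) < s := hs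
    have h1 : 0 < s + t := by linarith
    have hr : 0 < s ^ (β-1) := Real.rpow_pos_of_pos hs0 _
    rw [Real.norm_eq_abs, Real.norm_eq_abs, abs_of_pos (div_pos hr (by positivity)),
      abs_of_pos (by positivity : (0:ℝ) < t⁻¹ * (s ^ (β-1) / (s+t)))]
    rw [div_le_iff₀ (by positivity : (0:ℝ) < (s+t)^2)]
    have expand : t⁻¹ * (s ^ (β-1) / (s+t)) * (s+t)^2 = t⁻¹ * (s+t) * s ^ (β-1) := by
      field_simp
    rw [expand]
    have h2 : (1:ℝ) ≤ t⁻¹ * (s + t) := by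
      rw [← div_eq_inv_mul, le_div_iff₀ ht]; linarith
    nlinarith

end Kappa

noncomputable def kappa (β : ℝ) : ℝ := ∫ u in Ioi (0:ℝ), u ^ (β - 1) / (1 + u)

noncomputable def kappa2 (β : ℝ) : ℝ := ∫ u in Ioi (0:ℝ), u ^ (β - 1) / (1 + u) ^ 2

section KapVal
variable {β : ℝ}

lemma int_kappa1 (hβ0 : 0 < β) (hβ1 : β < 1) :
    IntegrableOn (fun u : ℝ => u ^ (β - 1) / (1 + u)) (Ioi (0:ℝ)) := by
  have h := int_aux1 hβ0 hβ1 one_pos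
  apply h.congr_fun _ measurableSet_Ioi
  intro s _
  show s ^ (β - 1) / (s + 1) = s ^ (β - 1) / (1 + s)
  rw [add_comm]

lemma int_kappa2 (hβ0 : 0 < β) (hβ1 : β < 1) :
    IntegrableOn (fun u : ℝ => u ^ (β - 1) / (1 + u) ^ 2) (Ioi (0:ℝ)) := by
  have h := int_aux2 hβ0 hβ1 one_pos
  apply h.congr_fun _ measurableSet_Ioi
  intro s _
  show s ^ (β - 1) / (s + 1) ^ 2 = s ^ (β - 1) / (1 + s) ^ 2
  rw [add_comm]

lemma kappa_pos (hβ0 : 0 < β) (hβ1 : β < 1) : 0 < kappa β := by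
  rw [kappa]
  have hint := int_kappa1 hβ0 hβ1
  have hnn : 0 ≤ᵐ[volume.restrict (Ioi (0:ℝ))] fun u : ℝ => u ^ (β - 1) / (1 + u) := by
    filter_upwards [ae_restrict_mem measurableSet_Ioi] with u hu
    have hu0 : (0:ℝ) < u := hu
    exact (div_pos (Real.rpow_pos_of_pos hu0 _) (by linarith)).le
  rw [integral_pos_iff_support_of_nonneg_ae hnn hint]
  have hsub : Ioi (0:ℝ) ⊆ Function.support fun u : ℝ => u ^ (β - 1) / (1 + u) := by
    intro u hu
    have hu0 : (0:ℝ) < u := hu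
    exact ne_of_gt (div_pos (Real.rpow_pos_of_pos hu0 _) (by linarith))
  calc (0:ENNReal) < volume.restrict (Ioi (0:ℝ)) (Ioi (0:ℝ)) := by
        rw [Measure.restrict_apply measurableSet_Ioi]
        simp [Real.volume_Ioi]
    _ ≤ _ := measure_mono hsub

lemma scale1 (hβ0 : 0 < β) (hβ1 : β < 1) {t : ℝ} (ht : 0 < t) :
    ∫ s in Ioi (0:ℝ), s ^ (β - 1) / (s + t) = t ^ (β - 1) * kappa β := by
  have h := MeasureTheory.integral_comp_mul_left_Ioi (fun s => s ^ (β - 1) / (s + t)) 0 ht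
  rw [mul_zero] at h
  have h2 : ∫ u in Ioi (0:ℝ), (t * u) ^ (β - 1) / (t * u + t)
      = t ^ (β - 2) * kappa β := by
    rw [kappa, ← integral_const_mul]
    apply setIntegral_congr_fun measurableSet_Ioi
    intro u hu
    have hu0 : (0:ℝ) < u := hu
    show (t * u) ^ (β - 1) / (t * u + t) = t ^ (β - 2) * (u ^ (β - 1) / (1 + u))
    rw [Real.mul_rpow ht.le hu0.le]
    have ht1 : t * u + t = t * (1 + u) := by ring
    rw [ht1, rpow_split ht β]
    have h1u : (0:ℝ) < 1 + u := by linarith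
    field_simp
  rw [h2] at h
  have h3 := congrArg (fun z => t • z) h
  simp only [smul_eq_mul] at h3
  rw [← mul_assoc t t⁻¹, mul_inv_cancel₀ (ne_of_gt ht), one_mul] at h3
  rw [← h3, rpow_split ht β]
  ring

lemma scale2 (hβ0 : 0 < β) (hβ1 : β < 1) {t : ℝ} (ht : 0 < t) :
    ∫ s in Ioi (0:ℝ), s ^ (β - 1) / (s + t) ^ 2 = t ^ (β - 2) * kappa2 β := by
  have h := MeasureTheory.integral_comp_mul_left_Ioi (fun s => s ^ (β - 1) / (s + t) ^ 2) 0 ht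
  rw [mul_zero] at h
  have h2 : ∫ u in Ioi (0:ℝ), (t * u) ^ (β - 1) / (t * u + t) ^ 2
      = t ^ (β - 3) * kappa2 β := by
    rw [kappa2, ← integral_const_mul]
    apply setIntegral_congr_fun measurableSet_Ioi
    intro u hu
    have hu0 : (0:ℝ) < u := hu
    show (t * u) ^ (β - 1) / (t * u + t) ^ 2 = t ^ (β - 3) * (u ^ (β - 1) / (1 + u) ^ 2)
    rw [Real.mul_rpow ht.le hu0.le]
    have ht1 : (t * u + t) ^ 2 = t ^ (2:ℕ) * (1 + u) ^ 2 := by ring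
    have hsplit : t ^ (β - 1) = t ^ (β - 3) * t ^ (2:ℕ) := by
      rw [← Real.rpow_natCast t 2, ← Real.rpow_add ht]
      congr 1
      ring
    rw [ht1, hsplit]
    have h1u : (0:ℝ) < 1 + u := by linarith
    field_simp
  rw [h2] at h
  have h3 := congrArg (fun z => t • z) h
  simp only [smul_eq_mul] at h3
  rw [← mul_assoc t t⁻¹, mul_inv_cancel₀ (ne_of_gt ht), one_mul] at h3
  rw [← h3]
  rw [show β - 2 = 1 + (β - 3) by ring, Real.rpow_add ht, Real.rpow_one]
  ring

end KapVal

section KapEq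
variable {β : ℝ}

lemma kappa2_eq (hβ0 : 0 < β) (hβ1 : β < 1) : kappa2 β = (1 - β) * kappa β := by
  set F : ℝ → ℝ := fun u => u ^ β / (1 + u) with hF
  set f' : ℝ → ℝ := fun u => (β * u ^ (β - 1) * (1 + u) - u ^ β * 1) / (1 + u) ^ 2 with hf'
  set G : ℝ → ℝ := fun u => β * (u ^ (β - 1) / (1 + u)) - u ^ (β - 1) / (1 + u)
      + u ^ (β - 1) / (1 + u) ^ 2 with hG
  have hGint : IntegrableOn G (Ioi (0:ℝ)) :=
    (((int_kappa1 hβ0 hβ1).const_mul β).sub (int_kappa1 hβ0 hβ1)).add (int_kappa2 hβ0 hβ1)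
  have heq : Set.EqOn f' G (Ioi (0:ℝ)) := by
    intro u hu
    have hu0 : (0:ℝ) < u := hu
    have h1u : (0:ℝ) < 1 + u := by linarith
    have hub : u ^ β = u ^ (β - 1) * u := by
      rw [show β = (β - 1) + 1 by ring]
      rw [Real.rpow_add hu0, Real.rpow_one]
      ring_nf
    simp only [hf', hG, hub]
    field_simp
    ring
  have hf'int : IntegrableOn f' (Ioi (0:ℝ)) := hGint.congr_fun heq.symm measurableSet_Ioi
  have hcont : ContinuousWithinAt F (Ici (0:ℝ)) 0 := by
    apply ContinuousAt.continuousWithinAt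
    exact (Real.continuousAt_rpow_const 0 β (Or.inr hβ0.le)).div
      (continuousAt_const.add continuousAt_id) (by norm_num)
  have hderiv : ∀ u ∈ Ioi (0:ℝ), HasDerivAt F (f' u) u := by
    intro u hu
    have hu0 : (0:ℝ) < u := hu
    have h1 : HasDerivAt (fun u : ℝ => u ^ β) (β * u ^ (β - 1)) u :=
      Real.hasDerivAt_rpow_const (Or.inl (ne_of_gt hu0))
    have h2 : HasDerivAt (fun u : ℝ => 1 + u) 1 u := (hasDerivAt_id u).const_add 1
    exact h1.div h2 (by linarith)
  have htop : Filter.Tendsto F Filter.atTop (nhds 0) := by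
    apply tendsto_of_tendsto_of_tendsto_of_le_of_le'
      tendsto_const_nhds (tendsto_rpow_neg_atTop (by linarith : 0 < 1 - β))
    · filter_upwards [Filter.eventually_ge_atTop (1:ℝ)] with u hu
      have hu0 : (0:ℝ) < u := by linarith
      exact (div_pos (Real.rpow_pos_of_pos hu0 _) (by linarith)).le
    · filter_upwards [Filter.eventually_ge_atTop (1:ℝ)] with u hu
      have hu0 : (0:ℝ) < u := by linarith
      have h1 : F u ≤ u ^ β / u :=
        div_le_div_of_nonneg_left (Real.rpow_pos_of_pos hu0 β).le hu0 (by linarith)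
      have h2 : u ^ β / u = u ^ (-(1 - β)) := by
        rw [show -(1 - β) = β - 1 by ring, Real.rpow_sub hu0, Real.rpow_one]
      linarith [h1, h2.le]
  have hFTC := integral_Ioi_of_hasDerivAt_of_tendsto hcont hderiv hf'int htop
  have hF0 : F 0 = 0 := by
    simp [hF, Real.zero_rpow (ne_of_gt hβ0)]
  rw [hF0, sub_zero] at hFTC
  have hGval : ∫ u in Ioi (0:ℝ), G u = β * kappa β - kappa β + kappa2 β := by
    have h12 : Integrable (fun u : ℝ => β * (u ^ (β - 1) / (1 + u)) - u ^ (β - 1) / (1 + u))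
        (volume.restrict (Ioi 0)) :=
      ((int_kappa1 hβ0 hβ1).const_mul β).sub (int_kappa1 hβ0 hβ1)
    have h3 : Integrable (fun u : ℝ => u ^ (β - 1) / (1 + u) ^ 2)
        (volume.restrict (Ioi 0)) := int_kappa2 hβ0 hβ1
    calc ∫ u in Ioi (0:ℝ), G u
        = ∫ u in Ioi (0:ℝ), ((β * (u ^ (β - 1) / (1 + u)) - u ^ (β - 1) / (1 + u))
            + u ^ (β - 1) / (1 + u) ^ 2) := rfl
      _ = (∫ u in Ioi (0:ℝ), (β * (u ^ (β - 1) / (1 + u)) - u ^ (β - 1) / (1 + u)))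
            + ∫ u in Ioi (0:ℝ), u ^ (β - 1) / (1 + u) ^ 2 := integral_add h12 h3
      _ = ((∫ u in Ioi (0:ℝ), β * (u ^ (β - 1) / (1 + u)))
            - ∫ u in Ioi (0:ℝ), u ^ (β - 1) / (1 + u)) + kappa2 β := by
          rw [integral_sub ((int_kappa1 hβ0 hβ1).const_mul β) (int_kappa1 hβ0 hβ1)]; rfl
      _ = β * kappa β - kappa β + kappa2 β := by rw [integral_const_mul]; rfl
  have hsame : ∫ u in Ioi (0:ℝ), f' u = ∫ u in Ioi (0:ℝ), G u :=
    setIntegral_congr_fun measurableSet_Ioi heq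
  rw [hsame, hGval] at hFTC
  linarith

end KapEq

/-- the divided-difference kernel -/
noncomputable def gker (s a b : ℝ) : ℝ :=
  (s * (a ^ 2 + a * b + b ^ 2) + a * b * (a + b)) / ((s + a) * (s + b))

section Gker
variable {β a b t : ℝ}

lemma gker_nonneg {s : ℝ} (hs : 0 < s) (ha : 0 < a) (hb : 0 < b) : 0 ≤ gker s a b := by
  rw [gker]
  have h1 : (0:ℝ) < s + a := by linarith
  have h2 : (0:ℝ) < s + b := by linarith
  positivity

lemma gker_contOn (ha : 0 < a) (hb : 0 < b) :
    ContinuousOn (fun s => s ^ (β - 1) * gker s a b) (Ioi (0:ℝ)) := by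
  intro u hu
  have hu0 : (0:ℝ) < u := hu
  apply ContinuousAt.continuousWithinAt
  apply ContinuousAt.mul
  · exact Real.continuousAt_rpow_const u (β - 1) (Or.inl (ne_of_gt hu0))
  · apply ContinuousAt.div
    · fun_prop
    · fun_prop
    · have h1 : (0:ℝ) < u + a := by linarith
      have h2 : (0:ℝ) < u + b := by linarith
      positivity
end Gker

section Rep
variable {β a b t : ℝ}

lemma int_gker (hβ0 : 0 < β) (hβ1 : β < 1) (ha : 0 < a) (hb : 0 < b) :
    IntegrableOn (fun s => s ^ (β - 1) * gker s a b) (Ioi (0:ℝ)) := by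
  set A : ℝ := a ^ 2 + a * b + b ^ 2 with hA
  set B : ℝ := a * b * (a + b) with hB
  have hApos : 0 < A := by rw [hA]; positivity
  have hBpos : 0 < B := by rw [hB]; positivity
  have hbound : IntegrableOn
      (fun s => A * (s ^ (β - 1) / (s + b)) + (B / b) * (s ^ (β - 1) / (s + a)))
      (Ioi (0:ℝ)) :=
    ((int_aux1 hβ0 hβ1 hb).const_mul A).add ((int_aux1 hβ0 hβ1 ha).const_mul (B / b))
  apply Integrable.mono hbound
  · exact (gker_contOn ha hb).aestronglyMeasurable measurableSet_Ioi
  · filter_upwards [ae_restrict_mem measurableSet_Ioi] with s hs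
    have hs0 : (0:ℝ) < s := hs
    have h1 : (0:ℝ) < s + a := by linarith
    have h2 : (0:ℝ) < s + b := by linarith
    have hrp : (0:ℝ) < s ^ (β - 1) := Real.rpow_pos_of_pos hs0 _
    have hg : 0 ≤ gker s a b := gker_nonneg hs0 ha hb
    have key : gker s a b ≤ A / (s + b) + (B / b) / (s + a) := by
      rw [gker, ← hA, ← hB]
      rw [div_add_div _ _ (ne_of_gt h2) (ne_of_gt h1), div_le_div_iff₀ (by positivity) (by positivity)]
      have hBb : (s + b) * (B / b) = B * s / b + B := by field_simp
      have hBsb : 0 ≤ B * s / b := by positivity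
      have hstep : s * A + B ≤ A * (s + a) + (s + b) * (B / b) := by
        rw [hBb]; nlinarith [mul_pos hApos ha]
      nlinarith [mul_le_mul_of_nonneg_right hstep (mul_pos h1 h2).le]
    rw [Real.norm_eq_abs, Real.norm_eq_abs, abs_of_nonneg (mul_nonneg hrp.le hg),
      abs_of_nonneg (by positivity)]
    calc s ^ (β - 1) * gker s a b ≤ s ^ (β - 1) * (A / (s + b) + (B / b) / (s + a)) :=
          mul_le_mul_of_nonneg_left key hrp.le
      _ = A * (s ^ (β - 1) / (s + b)) + (B / b) * (s ^ (β - 1) / (s + a)) := by ring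

lemma rep1 (hβ0 : 0 < β) (hβ1 : β < 1) (ht : 0 < t) :
    ∫ s in Ioi (0:ℝ), s ^ (β - 1) * (t ^ 3 / (s + t)) = t ^ (β + 2) * kappa β := by
  have h1 : ∫ s in Ioi (0:ℝ), s ^ (β - 1) * (t ^ 3 / (s + t))
      = ∫ s in Ioi (0:ℝ), t ^ 3 * (s ^ (β - 1) / (s + t)) := by
    apply setIntegral_congr_fun measurableSet_Ioi
    intro s _
    show s ^ (β - 1) * (t ^ 3 / (s + t)) = t ^ 3 * (s ^ (β - 1) / (s + t))
    ring
  rw [h1, integral_const_mul, scale1 hβ0 hβ1 ht]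
  rw [← Real.rpow_natCast t 3, ← mul_assoc, ← Real.rpow_add ht]
  have e : ((3:ℕ):ℝ) + (β - 1) = β + 2 := by push_cast; ring
  rw [e]

lemma int_rep1 (hβ0 : 0 < β) (hβ1 : β < 1) (ht : 0 < t) :
    IntegrableOn (fun s => s ^ (β - 1) * (t ^ 3 / (s + t))) (Ioi (0:ℝ)) := by
  have h : IntegrableOn (fun s => t ^ 3 * (s ^ (β - 1) / (s + t))) (Ioi (0:ℝ)) :=
    (int_aux1 hβ0 hβ1 ht).const_mul _
  apply h.congr_fun _ measurableSet_Ioi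
  intro s _
  show t ^ 3 * (s ^ (β - 1) / (s + t)) = s ^ (β - 1) * (t ^ 3 / (s + t))
  ring

lemma rep_offdiag (hβ0 : 0 < β) (hβ1 : β < 1) (ha : 0 < a) (hb : 0 < b) (hab : a ≠ b) :
    ∫ s in Ioi (0:ℝ), s ^ (β - 1) * gker s a b
      = ((a ^ (β + 2) - b ^ (β + 2)) / (a - b)) * kappa β := by
  have heq : Set.EqOn (fun s => s ^ (β - 1) * gker s a b)
      (fun s => (a - b)⁻¹ * (s ^ (β - 1) * (a ^ 3 / (s + a)) - s ^ (β - 1) * (b ^ 3 / (s + b))))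
      (Ioi (0:ℝ)) := by
    intro s hs
    have hs0 : (0:ℝ) < s := hs
    have h1 : (0:ℝ) < s + a := by linarith
    have h2 : (0:ℝ) < s + b := by linarith
    have hab' : a - b ≠ 0 := sub_ne_zero.mpr hab
    show s ^ (β - 1) * gker s a b = _
    rw [gker]
    field_simp
    ring
  rw [setIntegral_congr_fun measurableSet_Ioi heq, integral_const_mul,
    integral_sub (int_rep1 hβ0 hβ1 ha) (int_rep1 hβ0 hβ1 hb),
    rep1 hβ0 hβ1 ha, rep1 hβ0 hβ1 hb]
  field_simp

lemma rep_diag (hβ0 : 0 < β) (hβ1 : β < 1) (ha : 0 < a) :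
    ∫ s in Ioi (0:ℝ), s ^ (β - 1) * gker s a a = (β + 2) * a ^ (β + 1) * kappa β := by
  have heq : Set.EqOn (fun s => s ^ (β - 1) * gker s a a)
      (fun s => 3 * a ^ 2 * (s ^ (β - 1) / (s + a)) - a ^ 3 * (s ^ (β - 1) / (s + a) ^ 2))
      (Ioi (0:ℝ)) := by
    intro s hs
    have hs0 : (0:ℝ) < s := hs
    have h1 : (0:ℝ) < s + a := by linarith
    show s ^ (β - 1) * gker s a a = _
    rw [gker]
    field_simp
    ring
  rw [setIntegral_congr_fun measurableSet_Ioi heq,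
    integral_sub ((int_aux1 hβ0 hβ1 ha).const_mul _) ((int_aux2 hβ0 hβ1 ha).const_mul _),
    integral_const_mul, integral_const_mul, scale1 hβ0 hβ1 ha, scale2 hβ0 hβ1 ha,
    kappa2_eq hβ0 hβ1]
  have e1 : a ^ (2:ℕ) * a ^ (β - 1) = a ^ (β + 1) := by
    rw [← Real.rpow_natCast a 2, ← Real.rpow_add ha]
    congr 1; ring
  have e2 : a ^ (3:ℕ) * a ^ (β - 2) = a ^ (β + 1) := by
    rw [← Real.rpow_natCast a 3, ← Real.rpow_add ha]
    congr 1; ring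
  calc 3 * a ^ 2 * (a ^ (β - 1) * kappa β) - a ^ 3 * (a ^ (β - 2) * ((1 - β) * kappa β))
      = (a ^ (2:ℕ) * a ^ (β - 1)) * (3 * kappa β)
        - (a ^ (3:ℕ) * a ^ (β - 2)) * ((1 - β) * kappa β) := by push_cast; ring
    _ = (β + 2) * a ^ (β + 1) * kappa β := by rw [e1, e2]; ring

end Rep


lemma exists_T_ne {n : ℕ} (p : Fin n → ℝ) (hp : ∀ i, 0 < p i) (hinj : Function.Injective p)
    (x : Fin n → ℝ) (hx : x ≠ 0) :
    ∃ s : ℝ, 0 < s ∧ (∑ i, x i / (s + p i)) ≠ 0 := by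
  by_contra hcon
  push_neg at hcon
  apply hx
  set P : Polynomial ℝ :=
    ∑ i, Polynomial.C (x i) * ∏ j ∈ Finset.univ.erase i, (Polynomial.X + Polynomial.C (p j))
    with hP
  have hPeval : ∀ s : ℝ, 0 < s → P.eval s = 0 := by
    intro s hs
    have hT := hcon s hs
    have hprod : P.eval s = (∑ i, x i / (s + p i)) * ∏ j, (s + p j) := by
      rw [hP]
      simp only [Polynomial.eval_finset_sum, Polynomial.eval_mul, Polynomial.eval_C,
        Polynomial.eval_prod, Polynomial.eval_add, Polynomial.eval_X]
      rw [Finset.sum_mul]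
      apply Finset.sum_congr rfl
      intro i _
      have hip : s + p i ≠ 0 := ne_of_gt (by linarith [hp i])
      rw [← Finset.prod_erase_mul Finset.univ _ (Finset.mem_univ i)]
      field_simp
    rw [hprod, hT, zero_mul]
  have hP0 : P = 0 := by
    apply Polynomial.eq_zero_of_infinite_isRoot
    apply Set.Infinite.mono (s := Ioi (0:ℝ)) _ (Set.Ioi_infinite (0:ℝ))
    intro s hs
    exact hPeval s hs
  funext k
  have hev : P.eval (-(p k)) = 0 := by rw [hP0]; simp
  rw [hP] at hev
  simp only [Polynomial.eval_finset_sum, Polynomial.eval_mul, Polynomial.eval_C,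
    Polynomial.eval_prod, Polynomial.eval_add, Polynomial.eval_X] at hev
  rw [Finset.sum_eq_single k] at hev
  · have hprodne : (∏ j ∈ Finset.univ.erase k, (-(p k) + p j)) ≠ 0 := by
      rw [Finset.prod_ne_zero_iff]
      intro j hj
      have hjk : j ≠ k := Finset.ne_of_mem_erase hj
      have : p j ≠ p k := fun h => hjk (hinj h)
      intro h0
      apply this
      linarith
    have := mul_eq_zero.mp hev
    rcases this with h | h
    · exact h
    · exact absurd h hprodne
  · intro i _ hik
    apply mul_eq_zero_of_right
    apply Finset.prod_eq_zero (Finset.mem_erase.mpr ⟨Ne.symm hik, Finset.mem_univ k⟩)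
    ring
  · intro h
    exact absurd (Finset.mem_univ k) h

theorem loewner_pos {n : ℕ} (p : Fin n → ℝ) (hp : ∀ i, 0 < p i) (hinj : Function.Injective p)
    {r : ℝ} (hr1 : 2 < r) (hr2 : r < 3) (x : Fin n → ℝ) (hx : x ≠ 0)
    (hsum : ∑ i, x i = 0) : 0 < x ⬝ᵥ (loewner p r).mulVec x := by
  set β : ℝ := r - 2 with hβ
  have hβ0 : 0 < β := by rw [hβ]; linarith
  have hβ1 : β < 1 := by rw [hβ]; linarith
  have hκ := kappa_pos hβ0 hβ1
  set T : ℝ → ℝ := fun s => ∑ i, x i / (s + p i) with hT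
  -- entry representation
  have hentry : ∀ i j, (loewner p r) i j * kappa β
      = ∫ s in Ioi (0:ℝ), s ^ (β - 1) * gker s (p i) (p j) := by
    intro i j
    by_cases hij : i = j
    · subst hij
      rw [rep_diag hβ0 hβ1 (hp i)]
      have : (loewner p r) i i = r * p i ^ (r - 1) := by simp [loewner]
      rw [this, show β + 2 = r by rw [hβ]; ring, show β + 1 = r - 1 by rw [hβ]; ring]
    · rw [rep_offdiag hβ0 hβ1 (hp i) (hp j) (fun h => hij (hinj h))]
      have : (loewner p r) i j = (p i ^ r - p j ^ r) / (p i - p j) := by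
        simp [loewner, hij]
      rw [this, show β + 2 = r by rw [hβ]; ring]
  -- quadratic form as double sum
  have hQ : x ⬝ᵥ (loewner p r).mulVec x = ∑ i, ∑ j, x i * x j * (loewner p r) i j := by
    simp only [dotProduct, Matrix.mulVec, Finset.mul_sum]
    apply Finset.sum_congr rfl
    intro i _
    apply Finset.sum_congr rfl
    intro j _
    ring
  have hint_term : ∀ z : Fin n × Fin n,
      IntegrableOn (fun s => x z.1 * x z.2 * (s ^ (β - 1) * gker s (p z.1) (p z.2)))
        (Ioi (0:ℝ)) :=
    fun z => (int_gker hβ0 hβ1 (hp z.1) (hp z.2)).const_mul _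
  -- swap sum and integral
  have hswap : (x ⬝ᵥ (loewner p r).mulVec x) * kappa β
      = ∫ s in Ioi (0:ℝ), ∑ z : Fin n × Fin n,
          x z.1 * x z.2 * (s ^ (β - 1) * gker s (p z.1) (p z.2)) := by
    rw [integral_finset_sum Finset.univ (fun z _ => hint_term z)]
    rw [hQ, Fintype.sum_prod_type, Finset.sum_mul]
    apply Finset.sum_congr rfl
    intro i _
    rw [Finset.sum_mul]
    apply Finset.sum_congr rfl
    intro j _
    rw [mul_assoc, hentry i j, ← integral_const_mul]
  -- pointwise kernel identity
  have hker : ∀ s ∈ Ioi (0:ℝ),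
      (∑ z : Fin n × Fin n, x z.1 * x z.2 * (s ^ (β - 1) * gker s (p z.1) (p z.2)))
        = s ^ (β - 1) * (s ^ 3 * T s ^ 2) := by
    intro s hs
    have hs0 : (0:ℝ) < s := hs
    have hsplit : ∀ i j : Fin n, x i * x j * gker s (p i) (p j)
        = (x i * x j * (p i + p j) - s * (x i * x j))
          + s ^ 3 * ((x i / (s + p i)) * (x j / (s + p j))) := by
      intro i j
      have h1 : (0:ℝ) < s + p i := by linarith [hp i]
      have h2 : (0:ℝ) < s + p j := by linarith [hp j]
      rw [gker]
      field_simp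
      ring
    have hzero : ∑ i, ∑ j, (x i * x j * (p i + p j) - s * (x i * x j)) = 0 := by
      have hinner : ∀ i, ∑ j, (x i * x j * (p i + p j) - s * (x i * x j))
          = x i * (∑ j, x j * p j) := by
        intro i
        calc ∑ j, (x i * x j * (p i + p j) - s * (x i * x j))
            = ∑ j, ((x i * p i - s * x i) * x j + x i * (x j * p j)) :=
              Finset.sum_congr rfl (fun j _ => by ring)
          _ = (x i * p i - s * x i) * (∑ j, x j) + x i * (∑ j, x j * p j) := by
              rw [Finset.sum_add_distrib, ← Finset.mul_sum, ← Finset.mul_sum]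
          _ = x i * (∑ j, x j * p j) := by rw [hsum]; ring
      calc ∑ i, ∑ j, (x i * x j * (p i + p j) - s * (x i * x j))
          = ∑ i, x i * (∑ j, x j * p j) := Finset.sum_congr rfl (fun i _ => hinner i)
        _ = (∑ i, x i) * (∑ j, x j * p j) := by rw [Finset.sum_mul]
        _ = 0 := by rw [hsum, zero_mul]
    have hsq : ∑ i, ∑ j, s ^ 3 * ((x i / (s + p i)) * (x j / (s + p j)))
        = s ^ 3 * T s ^ 2 := by
      calc ∑ i, ∑ j, s ^ 3 * ((x i / (s + p i)) * (x j / (s + p j)))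
          = s ^ 3 * ∑ i, ∑ j, (x i / (s + p i)) * (x j / (s + p j)) := by
            rw [Finset.mul_sum]
            apply Finset.sum_congr rfl
            intro i _
            rw [Finset.mul_sum]
        _ = s ^ 3 * ((∑ i, x i / (s + p i)) * (∑ j, x j / (s + p j))) := by
            rw [Finset.sum_mul_sum]
        _ = s ^ 3 * T s ^ 2 := by rw [hT]; ring
    calc ∑ z : Fin n × Fin n, x z.1 * x z.2 * (s ^ (β - 1) * gker s (p z.1) (p z.2))
        = ∑ i, ∑ j, x i * x j * (s ^ (β - 1) * gker s (p i) (p j)) := by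
          rw [Fintype.sum_prod_type]
      _ = s ^ (β - 1) * ∑ i, ∑ j, x i * x j * gker s (p i) (p j) := by
          rw [Finset.mul_sum]
          apply Finset.sum_congr rfl
          intro i _
          rw [Finset.mul_sum]
          apply Finset.sum_congr rfl
          intro j _
          ring
      _ = s ^ (β - 1) * (∑ i, ∑ j, ((x i * x j * (p i + p j) - s * (x i * x j))
            + s ^ 3 * ((x i / (s + p i)) * (x j / (s + p j))))) := by
          congr 1
          apply Finset.sum_congr rfl
          intro i _
          exact Finset.sum_congr rfl (fun j _ => hsplit i j)
      _ = s ^ (β - 1) * ((∑ i, ∑ j, (x i * x j * (p i + p j) - s * (x i * x j)))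
            + ∑ i, ∑ j, s ^ 3 * ((x i / (s + p i)) * (x j / (s + p j)))) := by
          congr 1
          rw [← Finset.sum_add_distrib]
          apply Finset.sum_congr rfl
          intro i _
          rw [← Finset.sum_add_distrib]
      _ = s ^ (β - 1) * (s ^ 3 * T s ^ 2) := by rw [hzero, hsq, zero_add]
  -- final form of the quadratic form
  have hrepQ : (x ⬝ᵥ (loewner p r).mulVec x) * kappa β
      = ∫ s in Ioi (0:ℝ), s ^ (β - 1) * (s ^ 3 * T s ^ 2) := by
    rw [hswap]
    exact setIntegral_congr_fun measurableSet_Ioi hker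
  have hfint : IntegrableOn (fun s => s ^ (β - 1) * (s ^ 3 * T s ^ 2)) (Ioi (0:ℝ)) := by
    have h : IntegrableOn (fun s => ∑ z : Fin n × Fin n,
        x z.1 * x z.2 * (s ^ (β - 1) * gker s (p z.1) (p z.2))) (Ioi (0:ℝ)) :=
      integrable_finset_sum Finset.univ (fun z _ => hint_term z)
    exact h.congr_fun hker measurableSet_Ioi
  have hnn : 0 ≤ᵐ[volume.restrict (Ioi (0:ℝ))]
      fun s => s ^ (β - 1) * (s ^ 3 * T s ^ 2) := by
    filter_upwards [ae_restrict_mem measurableSet_Ioi] with s hs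
    have hs0 : (0:ℝ) < s := hs
    have := Real.rpow_pos_of_pos hs0 (β - 1)
    positivity
  have hpos_int : 0 < ∫ s in Ioi (0:ℝ), s ^ (β - 1) * (s ^ 3 * T s ^ 2) := by
    rw [integral_pos_iff_support_of_nonneg_ae hnn hfint]
    obtain ⟨s₀, hs₀, hTs₀⟩ := exists_T_ne p hp hinj x hx
    have hcont : ContinuousAt T s₀ := by
      apply tendsto_finset_sum
      intro i _
      exact continuousAt_const.div (continuousAt_id.add continuousAt_const)
        (ne_of_gt (by linarith [hp i]))
    have hev : ∀ᶠ y in nhds s₀, T y ≠ 0 := hcont.eventually_ne hTs₀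
    obtain ⟨ε, hε, hball⟩ := Metric.eventually_nhds_iff_ball.mp hev
    set δ := min (ε / 2) (s₀ / 2) with hδ
    have hδ0 : 0 < δ := lt_min (by linarith) (by linarith)
    have hδε : δ ≤ ε / 2 := min_le_left _ _
    have hδs : δ ≤ s₀ / 2 := min_le_right _ _
    have hsubIoi : Ioo (s₀ - δ) (s₀ + δ) ⊆ Ioi (0:ℝ) := by
      intro y hy
      have := hy.1
      have : s₀ - δ ≥ s₀ / 2 := by linarith
      simp only [mem_Ioi]
      linarith [hy.1]
    have hsub : Ioo (s₀ - δ) (s₀ + δ) ⊆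
        Function.support (fun s => s ^ (β - 1) * (s ^ 3 * T s ^ 2)) := by
      intro y hy
      have hy0 : 0 < y := hsubIoi hy
      have hyb : T y ≠ 0 := by
        apply hball
        rw [Metric.mem_ball, Real.dist_eq, abs_lt]
        constructor
        · linarith [hy.1]
        · linarith [hy.2]
      have hT2 : 0 < T y ^ 2 :=
        lt_of_le_of_ne (sq_nonneg _) (Ne.symm (pow_ne_zero 2 hyb))
      apply ne_of_gt
      exact mul_pos (Real.rpow_pos_of_pos hy0 _) (mul_pos (pow_pos hy0 3) hT2)
    calc (0:ENNReal) < volume.restrict (Ioi (0:ℝ)) (Ioo (s₀ - δ) (s₀ + δ)) := by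
          rw [Measure.restrict_apply measurableSet_Ioo,
            Set.inter_eq_self_of_subset_left hsubIoi, Real.volume_Ioo]
          apply ENNReal.ofReal_pos.mpr
          linarith
      _ ≤ volume.restrict (Ioi (0:ℝ))
            (Function.support (fun s => s ^ (β - 1) * (s ^ 3 * T s ^ 2))) :=
          measure_mono hsub
  by_contra hQle
  push_neg at hQle
  have hcontra : 0 < (x ⬝ᵥ (loewner p r).mulVec x) * kappa β := by
    rw [hrepQ]; exact hpos_int
  nlinarith [mul_nonneg (neg_nonneg.mpr hQle) hκ.le]



lemma sinh_mul_lt {r u : ℝ} (hr : 1 < r) (hu : 0 < u) : r * Real.sinh u < Real.sinh (r * u) := by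
  have hmono : StrictMonoOn (fun t => Real.sinh (r * t) - r * Real.sinh t) (Set.Ici 0) := by
    apply strictMonoOn_of_deriv_pos (convex_Ici 0)
    · fun_prop
    · intro t ht
      rw [interior_Ici] at ht
      have ht0 : (0:ℝ) < t := ht
      have h1 : HasDerivAt (fun t => Real.sinh (r * t)) (Real.cosh (r * t) * r) t := by
        exact ((Real.hasDerivAt_sinh (r * t)).comp t ((hasDerivAt_id t).const_mul r)).congr_deriv (by simp)
      have hd : HasDerivAt (fun t => Real.sinh (r * t) - r * Real.sinh t)
          (Real.cosh (r * t) * r - r * Real.cosh t) t :=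
        h1.sub ((Real.hasDerivAt_sinh t).const_mul r)
      rw [hd.deriv]
      have : Real.cosh t < Real.cosh (r * t) := by
        rw [Real.cosh_lt_cosh, abs_of_pos ht0, abs_of_pos (by nlinarith : (0:ℝ) < r * t)]
        nlinarith
      nlinarith
  have h := hmono Set.self_mem_Ici (Set.mem_Ici.mpr hu.le) hu
  simpa using h

lemma minor_neg {a b r : ℝ} (ha : 0 < a) (hab : a < b) (hr : 1 < r) :
    r ^ 2 * (a * b) ^ (r - 1) * (b - a) ^ 2 < (b ^ r - a ^ r) ^ 2 := by
  have hb : 0 < b := ha.trans hab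
  set m := (Real.log a + Real.log b) / 2 with hm
  set u := (Real.log b - Real.log a) / 2 with hu
  have hu0 : 0 < u := by
    have := Real.log_lt_log ha hab
    simp only [hu]; linarith
  have hla : Real.log a = m - u := by rw [hm, hu]; ring
  have hlb : Real.log b = m + u := by rw [hm, hu]; ring
  have har : a ^ r = Real.exp (r * m) * Real.exp (-(r * u)) := by
    rw [Real.rpow_def_of_pos ha, hla, ← Real.exp_add]; ring_nf
  have hbr : b ^ r = Real.exp (r * m) * Real.exp (r * u) := by
    rw [Real.rpow_def_of_pos hb, hlb, ← Real.exp_add]; ring_nf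
  have hax : a = Real.exp m * Real.exp (-u) := by
    conv_lhs => rw [← Real.exp_log ha]
    rw [hla, ← Real.exp_add]; ring_nf
  have hbx : b = Real.exp m * Real.exp u := by
    conv_lhs => rw [← Real.exp_log hb]
    rw [hlb, ← Real.exp_add]
  have hab2 : (a * b) ^ (r - 1) = Real.exp (2 * m * (r - 1)) := by
    have h1 : a * b = Real.exp (2 * m) := by
      rw [hax, hbx, ← Real.exp_add, ← Real.exp_add, ← Real.exp_add]; ring_nf
    rw [h1, Real.rpow_def_of_pos (Real.exp_pos _), Real.log_exp]
  have e1 : b - a = Real.exp m * (2 * Real.sinh u) := by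
    rw [hax, hbx, Real.sinh_eq]; ring
  have e2 : b ^ r - a ^ r = Real.exp (r * m) * (2 * Real.sinh (r * u)) := by
    rw [har, hbr, Real.sinh_eq]; ring
  rw [hab2, e1, e2]
  have hexp : Real.exp (2 * m * (r - 1)) * Real.exp m ^ 2 = Real.exp (r * m) ^ 2 := by
    rw [sq, sq, ← Real.exp_add, ← Real.exp_add, ← Real.exp_add]; ring_nf
  have key := sinh_mul_lt hr hu0
  have hs : 0 < Real.sinh u := Real.sinh_pos_iff.mpr hu0
  calc r ^ 2 * Real.exp (2 * m * (r - 1)) * (Real.exp m * (2 * Real.sinh u)) ^ 2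
      = (Real.exp (2 * m * (r - 1)) * Real.exp m ^ 2) * (4 * (r * Real.sinh u) ^ 2) := by ring
    _ = Real.exp (r * m) ^ 2 * (4 * (r * Real.sinh u) ^ 2) := by rw [hexp]
    _ < Real.exp (r * m) ^ 2 * (4 * Real.sinh (r * u) ^ 2) := by
        have h1 : (r * Real.sinh u) ^ 2 < Real.sinh (r * u) ^ 2 :=
          pow_lt_pow_left₀ key (by positivity) (by norm_num)
        have h2 : (0:ℝ) < Real.exp (r * m) ^ 2 := by positivity
        exact (mul_lt_mul_iff_right₀ h2).mpr (by nlinarith)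
    _ = (Real.exp (r * m) * (2 * Real.sinh (r * u))) ^ 2 := by ring

lemma loewner_exists_neg {n : ℕ} (hn : 2 ≤ n) (p : Fin n → ℝ)
    (hp : ∀ i, 0 < p i) (hmono : StrictMono p) {r : ℝ} (hr1 : 2 < r) (hr2 : r < 3) :
    ∃ y : Fin n → ℝ, y ⬝ᵥ (loewner p r).mulVec y < 0 := by
  set i0 : Fin n := ⟨0, by omega⟩ with hi0
  set i1 : Fin n := ⟨1, by omega⟩ with hi1
  have hne : i0 ≠ i1 := by simp [hi0, hi1, Fin.ext_iff]
  set a := p i0 with hadef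
  set b := p i1 with hbdef
  have hab : a < b := hmono (by simp [hi0, hi1, Fin.lt_def])
  have ha : 0 < a := hp i0
  have hb : 0 < b := hp i1
  set L := loewner p r with hL
  have hL00 : L i0 i0 = r * a ^ (r - 1) := by simp [hL, loewner, hadef]
  have hL11 : L i1 i1 = r * b ^ (r - 1) := by simp [hL, loewner, hbdef]
  set E := (b ^ r - a ^ r) / (b - a) with hE
  have hL01 : L i0 i1 = E := by
    simp only [hL, loewner, Matrix.of_apply, if_neg hne, hE, hadef, hbdef]
    rw [← neg_div_neg_eq]; ring_nf
  have hL10 : L i1 i0 = E := by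
    simp only [hL, loewner, Matrix.of_apply, if_neg (Ne.symm hne), hE, hadef, hbdef]
  set c := -(r * a ^ (r - 1)) with hc
  set y : Fin n → ℝ := E • (Pi.single i0 1 : Fin n → ℝ) + c • (Pi.single i1 1 : Fin n → ℝ) with hy
  refine ⟨y, ?_⟩
  have hmv : L.mulVec y = E • (fun k => L k i0) + c • (fun k => L k i1) := by
    rw [hy, Matrix.mulVec_add, Matrix.mulVec_smul, Matrix.mulVec_smul]
    congr 1 <;> · congr 1; funext k; simp [Matrix.mulVec_single]
  have hz0 : (L.mulVec y) i0 = E * L i0 i0 + c * L i0 i1 := by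
    rw [hmv]; simp
  have hz1 : (L.mulVec y) i1 = E * L i1 i0 + c * L i1 i1 := by
    rw [hmv]; simp
  have hyd : ∀ w : Fin n → ℝ, y ⬝ᵥ w = E * w i0 + c * w i1 := by
    intro w
    rw [hy]
    simp [add_dotProduct, smul_dotProduct, single_dotProduct]
  have hQ : y ⬝ᵥ L.mulVec y
      = E * (E * L i0 i0 + c * L i0 i1) + c * (E * L i1 i0 + c * L i1 i1) := by
    rw [hyd, hz0, hz1]
  rw [hQ, hL00, hL11, hL01, hL10]
  have hkey : (r * a ^ (r - 1)) * (r * b ^ (r - 1)) < E ^ 2 := by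
    have h1 : r ^ 2 * (a * b) ^ (r - 1) * (b - a) ^ 2 < (b ^ r - a ^ r) ^ 2 :=
      minor_neg ha hab (by linarith)
    have h2 : (a * b) ^ (r - 1) = a ^ (r - 1) * b ^ (r - 1) :=
      Real.mul_rpow ha.le hb.le
    have hba : (0:ℝ) < (b - a) ^ 2 := pow_pos (sub_pos.mpr hab) 2
    rw [hE, div_pow, lt_div_iff₀ hba]
    calc r * a ^ (r-1) * (r * b ^ (r-1)) * (b-a)^2
        = r ^ 2 * (a * b) ^ (r - 1) * (b - a) ^ 2 := by rw [h2]; ring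
      _ < (b ^ r - a ^ r) ^ 2 := h1
  have hL00pos : 0 < r * a ^ (r - 1) := by
    have := Real.rpow_pos_of_pos ha (r - 1)
    nlinarith
  rw [hc]
  nlinarith [hkey, hL00pos]


lemma inertia_count {n : ℕ} (hn : 2 ≤ n) {A : Matrix (Fin n) (Fin n) ℝ} (hA : A.IsHermitian)
    (hpos : ∀ x : Fin n → ℝ, x ≠ 0 → (∑ i, x i) = 0 → 0 < x ⬝ᵥ A.mulVec x)
    (hneg : ∃ y : Fin n → ℝ, y ⬝ᵥ A.mulVec y < 0) :
    Fintype.card {i // 0 < hA.eigenvalues i} = n - 1 ∧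
    Fintype.card {i // hA.eigenvalues i = 0} = 0 ∧
    Fintype.card {i // hA.eigenvalues i < 0} = 1 := by
  set lam := hA.eigenvalues with hlam
  set v := hA.eigenvectorBasis with hv
  have hdot : ∀ k l, (⇑(v k) : Fin n → ℝ) ⬝ᵥ ⇑(v l) = if k = l then 1 else 0 := by
    intro k l
    have h := (orthonormal_iff_ite.mp v.orthonormal) k l
    simpa [PiLp.inner_apply, dotProduct, mul_comm] using h
  -- step 1 : at most one nonpositive eigenvalue
  have claim1 : ∀ i j, lam i ≤ 0 → lam j ≤ 0 → i = j := by
    intro i j hi hj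
    by_contra hij
    set s1 : ℝ := ∑ k, v i k with hs1
    set s2 : ℝ := ∑ k, v j k with hs2
    obtain ⟨c₁, c₂, hc, hsum⟩ : ∃ c₁ c₂ : ℝ, ¬(c₁ = 0 ∧ c₂ = 0) ∧ c₁ * s1 + c₂ * s2 = 0 := by
      by_cases h1 : s1 = 0
      · exact ⟨1, 0, by simp, by simp [h1]⟩
      · exact ⟨s2, -s1, fun h => h1 (by simpa using h.2), by ring⟩
    set x : Fin n → ℝ := fun k => c₁ * v i k + c₂ * v j k with hx
    have hxi : x ⬝ᵥ ⇑(v i) = c₁ := by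
      have : x ⬝ᵥ ⇑(v i) = c₁ * ((⇑(v i) : Fin n → ℝ) ⬝ᵥ ⇑(v i)) + c₂ * ((⇑(v j) : Fin n → ℝ) ⬝ᵥ ⇑(v i)) := by
        simp [hx, dotProduct, Finset.mul_sum, add_mul, mul_assoc, Finset.sum_add_distrib]
      rw [this, hdot, hdot]; simp [hij, Ne.symm hij]
    have hxj : x ⬝ᵥ ⇑(v j) = c₂ := by
      have : x ⬝ᵥ ⇑(v j) = c₁ * ((⇑(v i) : Fin n → ℝ) ⬝ᵥ ⇑(v j)) + c₂ * ((⇑(v j) : Fin n → ℝ) ⬝ᵥ ⇑(v j)) := by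
        simp [hx, dotProduct, Finset.mul_sum, add_mul, mul_assoc, Finset.sum_add_distrib]
      rw [this, hdot, hdot]; simp [hij, Ne.symm hij]
    have hxne : x ≠ 0 := by
      intro h0
      apply hc
      constructor
      · rw [← hxi, h0]; simp
      · rw [← hxj, h0]; simp
    have hxsum : (∑ k, x k) = 0 := by
      simp only [hx, Finset.sum_add_distrib, ← Finset.mul_sum, ← hs1, ← hs2]
      exact hsum
    have hAx : A.mulVec x = (c₁ * lam i) • (⇑(v i) : Fin n → ℝ) + (c₂ * lam j) • ⇑(v j) := by
      have h1 : A.mulVec x = c₁ • (A *ᵥ ⇑(v i)) + c₂ • (A *ᵥ ⇑(v j)) := by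
        have : x = c₁ • (⇑(v i) : Fin n → ℝ) + c₂ • ⇑(v j) := by
          funext k; simp [hx]
        rw [this, Matrix.mulVec_add, Matrix.mulVec_smul, Matrix.mulVec_smul]
      rw [h1, hA.mulVec_eigenvectorBasis, hA.mulVec_eigenvectorBasis, smul_smul, smul_smul]
    have hQ : x ⬝ᵥ A.mulVec x = c₁^2 * lam i + c₂^2 * lam j := by
      rw [hAx, dotProduct_add, dotProduct_smul, dotProduct_smul,
        hxi, hxj]
      simp only [smul_eq_mul]
      ring
    have hQpos := hpos x hxne hxsum
    rw [hQ] at hQpos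
    have : c₁^2 * lam i + c₂^2 * lam j ≤ 0 := by
      have h1 : c₁^2 * lam i ≤ 0 := mul_nonpos_of_nonneg_of_nonpos (sq_nonneg _) hi
      have h2 : c₂^2 * lam j ≤ 0 := mul_nonpos_of_nonneg_of_nonpos (sq_nonneg _) hj
      linarith
    linarith
  -- step 2 : some eigenvalue is negative
  have claim2 : ∃ i, lam i < 0 := by
    by_contra h
    push_neg at h
    have hps : A.PosSemidef := hA.posSemidef_iff_eigenvalues_nonneg.mpr h
    obtain ⟨y, hy⟩ := hneg
    have := hps.dotProduct_mulVec_nonneg y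
    rw [star_trivial] at this
    linarith
  obtain ⟨i₀, hi₀⟩ := claim2
  have huniq : ∀ i, lam i ≤ 0 → i = i₀ := fun i hi => claim1 i i₀ hi hi₀.le
  have hzero : Fintype.card {i // lam i = 0} = 0 := by
    rw [Fintype.card_eq_zero_iff]
    refine ⟨fun ⟨i, hi⟩ => ?_⟩
    have := huniq i hi.le
    subst this
    exact absurd hi (ne_of_lt hi₀)
  have hneg1 : Fintype.card {i // lam i < 0} = 1 := by
    rw [Fintype.card_eq_one_iff]
    exact ⟨⟨i₀, hi₀⟩, fun ⟨j, hj⟩ => Subtype.ext (huniq j hj.le)⟩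
  have hle1 : Fintype.card {i // ¬ (0 < lam i)} = 1 := by
    rw [Fintype.card_eq_one_iff]
    refine ⟨⟨i₀, not_lt.mpr hi₀.le⟩, fun ⟨j, hj⟩ => Subtype.ext (huniq j (not_lt.mp hj))⟩
  have hposcard : Fintype.card {i // 0 < lam i} = n - 1 := by
    have h := Fintype.card_subtype_compl (fun i => 0 < lam i)
    rw [hle1, Fintype.card_fin] at h
    have hle : Fintype.card {i // 0 < lam i} ≤ n := by
      simpa using Fintype.card_subtype_le (fun i => 0 < lam i)
    omega
  exact ⟨hposcard, hzero, hneg1⟩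


/-- For `2 < r < 3` (and `n ≥ 2`), the Loewner matrix `L_r` is strictly conditionally
positive definite: `⟨x, L_r x⟩ > 0` for every nonzero `x` with `∑ i, x i = 0`.
Consequently the inertia of `L_r` is `(n - 1, 0, 1)`. -/
theorem loewner_conditionally_positive {n : ℕ} (hn : 2 ≤ n) (p : Fin n → ℝ)
    (hp : ∀ i, 0 < p i) (hmono : StrictMono p)
    (r : ℝ) (hr1 : 2 < r) (hr2 : r < 3)
    (hA : (loewner p r).IsHermitian) :
    (∀ x : Fin n → ℝ, x ≠ 0 → (∑ i, x i) = 0 →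
      0 < x ⬝ᵥ (loewner p r).mulVec x) ∧
    Fintype.card {i // 0 < hA.eigenvalues i} = n - 1 ∧
    Fintype.card {i // hA.eigenvalues i = 0} = 0 ∧
    Fintype.card {i // hA.eigenvalues i < 0} = 1 := by
  have hinj : Function.Injective p := hmono.injective
  have hpos : ∀ x : Fin n → ℝ, x ≠ 0 → (∑ i, x i) = 0 →
      0 < x ⬝ᵥ (loewner p r).mulVec x :=
    fun x hx hs => loewner_pos p hp hinj hr1 hr2 x hx hs
  have hneg := loewner_exists_neg hn p hp hmono hr1 hr2
  obtain ⟨h1, h2, h3⟩ := inertia_count hn hA hpos hneg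
  exact ⟨hpos, h1, h2, h3⟩
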